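/- For every N ∈ ℕ there is a constant C_N independent of ν such that for all ν ≥ 1/2 and all r ≥ 2ν: (1/Γ(ν+1/2)) · | (∂/∂r)^N ∫_0^∞ e^{-t} t^{ν-1/2} (1 + it/(2r))^{ν-1/2} dt | ≤ C_N · 2^ν · (ν/r)^N, where (ν/r)^0 is interpreted as 1. -/

import Mathlib

open MeasureTheory Complex Set Metric Nat

noncomputable section

/-- The base `1 + it/(2z)` appearing in the Macdonald integral. -/
def mcW (z : ℂ) (t : ℝ) : ℂ := 1 + Complex.I * (t : ℂ) / (2 * z)

lemma mcW_im_pos {z : ℂ} (hz : 0 < z.re) {t : ℝ} (ht : 0 < t) : 0 < (mcW z t).im := by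
  have hz0 : z ≠ 0 := fun h => by simp [h] at hz
  have hn : 0 < Complex.normSq (z * 2) := by
    simpa using Complex.normSq_pos.2 (mul_ne_zero hz0 two_ne_zero)
  simp only [mcW, Complex.add_im, Complex.one_im, zero_add, Complex.div_im,
    Complex.mul_im, Complex.mul_re, Complex.I_re, Complex.I_im, Complex.ofReal_re,
    Complex.ofReal_im]
  have h2 : Complex.re 2 = 2 := by norm_num
  have h2' : Complex.im 2 = 0 := by norm_num
  rw [h2, h2']
  ring_nf
  positivity

lemma mcW_norm_le {z : ℂ} (hz0 : z ≠ 0) {t : ℝ} (ht : 0 ≤ t) :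
    ‖mcW z t‖ ≤ 1 + t / (2 * ‖z‖) := by
  refine (norm_add_le _ _).trans ?_
  simp only [mcW, norm_one, norm_div, norm_mul, Complex.norm_I, Complex.norm_real,
    Real.norm_eq_abs, Complex.norm_two, one_mul, _root_.abs_of_nonneg ht, le_refl]

lemma mcW_norm_ge {z : ℂ} (hz : 0 < z.re) (t : ℝ) : z.re / ‖z‖ ≤ ‖mcW z t‖ := by
  have hz0 : z ≠ 0 := fun h => by simp [h] at hz
  have hzn : 0 < ‖z‖ := norm_pos_iff.2 hz0
  have key : mcW z t * z = z + Complex.I * t / 2 := by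
    simp only [mcW]; field_simp
  have h1 : (mcW z t * z).re = z.re := by
    rw [key]; simp [Complex.add_re, Complex.div_re]
  have h2 : (mcW z t * z).re ≤ ‖mcW z t * z‖ := Complex.re_le_norm _
  rw [h1, norm_mul] at h2
  rw [div_le_iff₀ hzn]
  exact h2

lemma norm_cpow_real {w : ℂ} (hw : w ≠ 0) (e : ℝ) : ‖w ^ ((e : ℝ) : ℂ)‖ = ‖w‖ ^ e := by
  rw [Complex.norm_cpow_of_ne_zero hw]
  simp

lemma one_add_rpow_le_exp {x m : ℝ} (hx : 0 ≤ x) (hm : 0 ≤ m) :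
    (1 + x) ^ m ≤ Real.exp (m * x) := by
  have h1 : (0:ℝ) < 1 + x := by linarith
  rw [Real.rpow_def_of_pos h1]
  apply Real.exp_le_exp.2
  have := Real.log_le_sub_one_of_pos h1
  calc Real.log (1 + x) * m ≤ x * m := by nlinarith [Real.log_le_sub_one_of_pos h1]
    _ = m * x := mul_comm _ _
lemma int_aux {s b : ℝ} (hs : -1 < s) (hb : 0 < b) :
    IntegrableOn (fun t : ℝ => t ^ s * Real.exp (-(b * t))) (Set.Ioi 0) := by
  have h := integrableOn_rpow_mul_exp_neg_mul_rpow hs zero_lt_one hb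
  refine h.congr_fun (fun t ht => ?_) measurableSet_Ioi
  simp only [Real.rpow_one, neg_mul]

lemma ne_zero_of_re_pos' {z : ℂ} (hz : 0 < z.re) : z ≠ 0 := fun h => by simp [h] at hz

lemma mcW_ne_zero {z : ℂ} (hz : 0 < z.re) {t : ℝ} (ht : 0 < t) : mcW z t ≠ 0 := by
  intro h
  have := mcW_im_pos hz ht
  rw [h] at this; simp at this

lemma mcW_cpow_continuousOn {z : ℂ} (hz : 0 < z.re) (e : ℂ) :
    ContinuousOn (fun t : ℝ => mcW z t ^ e) (Set.Ioi 0) := by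
  intro t ht
  apply ContinuousAt.continuousWithinAt
  have hc : ContinuousAt (fun t : ℝ => mcW z t) t := by
    apply Continuous.continuousAt
    exact continuous_const.add ((continuous_const.mul Complex.continuous_ofReal).div_const _)
  exact hc.cpow continuousAt_const (Or.inr (mcW_im_pos hz ht).ne')

lemma aesm_A_mul {μ : ℝ} {g : ℝ → ℂ} (hg : ContinuousOn g (Set.Ioi 0)) :
    AEStronglyMeasurable (fun t : ℝ => ((Real.exp (-t) * t ^ μ : ℝ) : ℂ) * g t)
      (volume.restrict (Set.Ioi 0)) := by
  apply ContinuousOn.aestronglyMeasurable ?_ measurableSet_Ioi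
  apply ContinuousOn.mul ?_ hg
  apply Complex.continuous_ofReal.comp_continuousOn
  apply ContinuousOn.mul (Continuous.continuousOn (by continuity))
  exact fun t ht => (Real.continuousAt_rpow_const t μ (Or.inl (ne_of_gt ht))).continuousWithinAt

lemma norm_A {μ t : ℝ} (ht : 0 ≤ t) :
    ‖((Real.exp (-t) * t ^ μ : ℝ) : ℂ)‖ = Real.exp (-t) * t ^ μ := by
  rw [Complex.norm_real, Real.norm_eq_abs]
  exact abs_of_nonneg (by positivity)

lemma mcW_rpow_le {μ a : ℝ} (hμ : 0 ≤ μ) (ha : 0 < a) {z : ℂ} (hza : a ≤ z.re)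
    {t : ℝ} (ht : 0 ≤ t) : ‖mcW z t‖ ^ μ ≤ Real.exp (μ / (2 * a) * t) := by
  have hz : 0 < z.re := lt_of_lt_of_le ha hza
  have hz0 : z ≠ 0 := ne_zero_of_re_pos' hz
  have hzn : a ≤ ‖z‖ := le_trans hza (Complex.re_le_norm z)
  have h1 : ‖mcW z t‖ ≤ 1 + t / (2 * a) := by
    refine (mcW_norm_le hz0 ht).trans ?_
    gcongr <;> linarith
  calc ‖mcW z t‖ ^ μ ≤ (1 + t / (2 * a)) ^ μ :=
        Real.rpow_le_rpow (norm_nonneg _) h1 hμ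
    _ ≤ Real.exp (μ * (t / (2 * a))) := one_add_rpow_le_exp (by positivity) hμ
    _ = Real.exp (μ / (2 * a) * t) := by ring_nf

lemma integrand_norm_bound {μ a : ℝ} (hμ : 0 ≤ μ) (ha : 0 < a) {z : ℂ} (hza : a ≤ z.re)
    {t : ℝ} (ht : 0 < t) :
    ‖((Real.exp (-t) * t ^ μ : ℝ) : ℂ) * mcW z t ^ ((μ : ℝ) : ℂ)‖ ≤
      t ^ μ * Real.exp (-((1 - μ / (2 * a)) * t)) := by
  have hz : 0 < z.re := lt_of_lt_of_le ha hza
  have hw0 : mcW z t ≠ 0 := mcW_ne_zero hz ht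
  rw [norm_mul, norm_cpow_real hw0 μ, norm_A ht.le]
  calc Real.exp (-t) * t ^ μ * ‖mcW z t‖ ^ μ
      ≤ Real.exp (-t) * t ^ μ * Real.exp (μ / (2 * a) * t) :=
        mul_le_mul_of_nonneg_left (mcW_rpow_le hμ ha hza ht.le) (by positivity)
    _ = t ^ μ * Real.exp (-((1 - μ / (2 * a)) * t)) := by
        rw [mul_comm (Real.exp (-t)) (t ^ μ), mul_assoc, ← Real.exp_add]
        ring_nf

lemma F_integrand_integrable {μ a : ℝ} (hμ : 0 ≤ μ) (ha : 0 < a) (hk : μ / (2 * a) < 1)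
    {z : ℂ} (hza : a ≤ z.re) :
    IntegrableOn (fun t : ℝ => ((Real.exp (-t) * t ^ μ : ℝ) : ℂ) * mcW z t ^ ((μ : ℝ) : ℂ))
      (Set.Ioi 0) := by
  have hz : 0 < z.re := lt_of_lt_of_le ha hza
  apply Integrable.mono' (int_aux (s := μ) (b := 1 - μ / (2 * a)) (by linarith) (by linarith))
  · exact aesm_A_mul (mcW_cpow_continuousOn hz _)
  · filter_upwards [ae_restrict_mem measurableSet_Ioi] with t ht
    exact integrand_norm_bound hμ ha hza ht

lemma hasDerivAt_integrand {μ : ℝ} {z : ℂ} (hz : 0 < z.re) {t : ℝ} (ht : 0 < t) :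
    HasDerivAt (fun z : ℂ => ((Real.exp (-t) * t ^ μ : ℝ) : ℂ) * mcW z t ^ ((μ : ℝ) : ℂ))
      (((Real.exp (-t) * t ^ μ : ℝ) : ℂ) *
        (((μ : ℝ) : ℂ) * mcW z t ^ (((μ : ℝ) : ℂ) - 1) * (Complex.I * t * (-2 / (2 * z) ^ 2)))) z := by
  have hz0 : z ≠ 0 := ne_zero_of_re_pos' hz
  have h2z : (2 : ℂ) * z ≠ 0 := mul_ne_zero two_ne_zero hz0
  have h1 : HasDerivAt (fun z : ℂ => 2 * z) 2 z := by
    simpa using (hasDerivAt_id z).const_mul (2 : ℂ)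
  have h2 : HasDerivAt (fun z : ℂ => ((2 : ℂ) * z)⁻¹) (-2 / (2 * z) ^ 2) z := h1.inv h2z
  have h3 : HasDerivAt (fun z : ℂ => Complex.I * t * (2 * z)⁻¹)
      (Complex.I * t * (-2 / (2 * z) ^ 2)) z := h2.const_mul _
  have h4 : HasDerivAt (fun z : ℂ => mcW z t) (Complex.I * t * (-2 / (2 * z) ^ 2)) z := by
    unfold mcW
    simpa [mul_div_assoc, div_eq_mul_inv] using h3.const_add 1
  have h5 := h4.cpow_const (c := ((μ : ℝ) : ℂ)) (Or.inr (mcW_im_pos hz ht).ne')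
  exact h5.const_mul _
/-- Norm bound for the `z`-derivative of the integrand. -/
lemma deriv_integrand_norm_bound {μ a b : ℝ} (hμ : 0 ≤ μ) (ha : 0 < a) {z : ℂ}
    (hza : a ≤ z.re) (hzb : ‖z‖ ≤ b) {t : ℝ} (ht : 0 < t) :
    ‖((Real.exp (-t) * t ^ μ : ℝ) : ℂ) *
        (((μ : ℝ) : ℂ) * mcW z t ^ (((μ : ℝ) : ℂ) - 1) * (Complex.I * t * (-2 / (2 * z) ^ 2)))‖ ≤
      μ * (b / a) / (2 * a ^ 2) * (t ^ (μ + 1) * Real.exp (-((1 - μ / (2 * a)) * t))) := by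
  have hz : 0 < z.re := lt_of_lt_of_le ha hza
  have hz0 : z ≠ 0 := ne_zero_of_re_pos' hz
  have hzn : 0 < ‖z‖ := norm_pos_iff.2 hz0
  have hab : 0 < b := lt_of_lt_of_le hzn hzb
  have hw0 : mcW z t ≠ 0 := mcW_ne_zero hz ht
  have hwn : 0 < ‖mcW z t‖ := norm_pos_iff.2 hw0
  -- rewrite the cpow exponent as a real cast
  have hsub : (((μ : ℝ) : ℂ) - 1) = (((μ - 1 : ℝ)) : ℂ) := by push_cast; ring
  -- lower bound for ‖mcW z t‖
  have hwlow : a / b ≤ ‖mcW z t‖ := by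
    refine le_trans ?_ (mcW_norm_ge hz t)
    rw [div_le_div_iff₀ hab hzn]
    nlinarith [Complex.re_le_norm z]
  have hwinv : ‖mcW z t‖⁻¹ ≤ b / a := by
    have := inv_anti₀ (by positivity : (0:ℝ) < a / b) hwlow
    rwa [inv_div] at this
  have hza' : a ≤ ‖z‖ := le_trans hza (Complex.re_le_norm z)
  -- compute the norm
  have hnorm : ‖((Real.exp (-t) * t ^ μ : ℝ) : ℂ) *
      (((μ : ℝ) : ℂ) * mcW z t ^ (((μ : ℝ) : ℂ) - 1) * (Complex.I * t * (-2 / (2 * z) ^ 2)))‖ =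
      (Real.exp (-t) * t ^ μ) * (μ * ‖mcW z t‖ ^ (μ - 1) * (t * (2 / (2 * ‖z‖) ^ 2))) := by
    have n1 : ‖((μ : ℝ) : ℂ)‖ = μ := by
      rw [Complex.norm_real, Real.norm_eq_abs]
      exact _root_.abs_of_nonneg hμ
    have n2 : ‖Complex.I * (t : ℂ) * (-2 / (2 * z) ^ 2)‖ = t * (2 / (2 * ‖z‖) ^ 2) := by
      rw [norm_mul, norm_mul, norm_div, norm_neg, norm_pow, norm_mul]
      rw [Complex.norm_I, Complex.norm_real, Real.norm_eq_abs,
        _root_.abs_of_nonneg ht.le, Complex.norm_two, one_mul]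
    rw [hsub, norm_mul, norm_A ht.le, norm_mul, norm_mul, norm_cpow_real hw0, n1, n2]
  rw [hnorm]
  have e1 : ‖mcW z t‖ ^ (μ - 1) ≤ Real.exp (μ / (2 * a) * t) * (b / a) := by
    have : ‖mcW z t‖ ^ (μ - 1) = ‖mcW z t‖ ^ μ * ‖mcW z t‖⁻¹ := by
      rw [Real.rpow_sub hwn, Real.rpow_one, div_eq_mul_inv]
    rw [this]
    exact mul_le_mul (mcW_rpow_le hμ ha hza ht.le) hwinv (by positivity) (Real.exp_pos _).le
  have e2 : t * (2 / (2 * ‖z‖) ^ 2) ≤ t * (2 / (2 * a) ^ 2) := by gcongr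
  calc (Real.exp (-t) * t ^ μ) * (μ * ‖mcW z t‖ ^ (μ - 1) * (t * (2 / (2 * ‖z‖) ^ 2)))
      ≤ (Real.exp (-t) * t ^ μ) *
        (μ * (Real.exp (μ / (2 * a) * t) * (b / a)) * (t * (2 / (2 * a) ^ 2))) := by
        apply mul_le_mul_of_nonneg_left ?_ (by positivity)
        apply mul_le_mul ?_ e2 (by positivity) (by positivity)
        exact mul_le_mul_of_nonneg_left e1 hμ
    _ = μ * (b / a) / (2 * a ^ 2) * (t ^ (μ + 1) * Real.exp (-((1 - μ / (2 * a)) * t))) := by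
        rw [Real.rpow_add_one (ne_of_gt ht)]
        have : Real.exp (-((1 - μ / (2 * a)) * t)) =
            Real.exp (-t) * Real.exp (μ / (2 * a) * t) := by
          rw [← Real.exp_add]; ring_nf
        rw [this]
        field_simp

lemma F_differentiableOn {μ : ℝ} (hμ : 0 ≤ μ) :
    DifferentiableOn ℂ
      (fun z : ℂ => ∫ t in Set.Ioi (0 : ℝ),
        ((Real.exp (-t) * t ^ μ : ℝ) : ℂ) * mcW z t ^ ((μ : ℝ) : ℂ))
      {z : ℂ | 0 < z.re ∧ μ < 2 * z.re} := by
  intro z₀ hz₀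
  obtain ⟨hz₀pos, hz₀k⟩ := hz₀
  apply DifferentiableAt.differentiableWithinAt
  set ε : ℝ := min ((2 * z₀.re - μ) / 8) (z₀.re / 2) with hεdef
  have hεpos : 0 < ε := lt_min (by linarith) (by linarith)
  have hε1 : ε ≤ (2 * z₀.re - μ) / 8 := min_le_left _ _
  have hε2 : ε ≤ z₀.re / 2 := min_le_right _ _
  set a : ℝ := z₀.re - ε with hadef
  have hapos : 0 < a := by simp only [hadef]; linarith
  have hak : μ / (2 * a) < 1 := by
    rw [div_lt_one (by positivity)]
    simp only [hadef]; linarith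
  set b : ℝ := ‖z₀‖ + ε with hbdef
  have hball : ∀ z ∈ ball z₀ ε, a ≤ z.re ∧ ‖z‖ ≤ b := by
    intro z hz
    rw [mem_ball, dist_eq_norm] at hz
    constructor
    · have : |(z - z₀).re| ≤ ‖z - z₀‖ := Complex.abs_re_le_norm (z - z₀)
      have h2 : (z - z₀).re = z.re - z₀.re := by simp [Complex.sub_re]
      rw [h2] at this
      have := abs_le.1 this
      simp only [hadef]; linarith [this.1]
    · have h0 : ‖z‖ ≤ ‖z - z₀‖ + ‖z₀‖ := by
        simpa using norm_add_le (z - z₀) z₀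
      simp only [hbdef]; linarith
  have key := hasDerivAt_integral_of_dominated_loc_of_deriv_le
    (μ := volume.restrict (Set.Ioi (0 : ℝ)))
    (F := fun (z : ℂ) (t : ℝ) =>
      ((Real.exp (-t) * t ^ μ : ℝ) : ℂ) * mcW z t ^ ((μ : ℝ) : ℂ))
    (F' := fun (z : ℂ) (t : ℝ) =>
      ((Real.exp (-t) * t ^ μ : ℝ) : ℂ) *
        (((μ : ℝ) : ℂ) * mcW z t ^ (((μ : ℝ) : ℂ) - 1) * (Complex.I * t * (-2 / (2 * z) ^ 2))))
    (x₀ := z₀)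
    (bound := fun t : ℝ =>
      μ * (b / a) / (2 * a ^ 2) * (t ^ (μ + 1) * Real.exp (-((1 - μ / (2 * a)) * t))))
    (ball_mem_nhds z₀ hεpos) ?_ ?_ ?_ ?_ ?_ ?_
  · exact key.2.differentiableAt
  · -- measurability of F z for z near z₀
    filter_upwards [IsOpen.mem_nhds (isOpen_lt continuous_const Complex.continuous_re)
      (by simpa using hz₀pos : z₀ ∈ {z : ℂ | 0 < z.re})] with z hz
    exact aesm_A_mul (mcW_cpow_continuousOn hz _)
  · exact F_integrand_integrable hμ hapos hak (by simp only [hadef]; linarith)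
  · -- measurability of F' z₀
    apply aesm_A_mul
    apply ContinuousOn.mul (ContinuousOn.mul continuousOn_const
      (mcW_cpow_continuousOn hz₀pos _))
    exact (Continuous.mul (continuous_const.mul Complex.continuous_ofReal)
      continuous_const).continuousOn
  · -- bound
    filter_upwards [ae_restrict_mem measurableSet_Ioi] with t ht z hz
    exact deriv_integrand_norm_bound hμ hapos (hball z hz).1 (hball z hz).2 ht
  · -- integrability of bound
    apply Integrable.const_mul
    have h := int_aux (s := μ + 1) (b := 1 - μ / (2 * a)) (by linarith) (by linarith)
    exact h
  · -- HasDerivAt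
    filter_upwards [ae_restrict_mem measurableSet_Ioi] with t ht z hz
    have hzre : 0 < z.re := lt_of_lt_of_le hapos (hball z hz).1
    exact hasDerivAt_integrand hzre ht
lemma cauchy_bound {f : ℂ → ℂ} {c : ℂ} {R M : ℝ} (hR : 0 < R)
    (hf : DifferentiableOn ℂ f (closedBall c R))
    (hM : ∀ z ∈ closedBall c R, ‖f z‖ ≤ M) (n : ℕ) :
    ‖iteratedDeriv n f c‖ ≤ (n ! : ℝ) * M / R ^ n := by
  have hM0 : 0 ≤ M := le_trans (norm_nonneg _) (hM c (mem_closedBall_self hR.le))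
  lift R to NNReal using hR.le with R' hR'
  have hRpos : 0 < R' := by exact_mod_cast hR
  have h : HasFPowerSeriesOnBall f (cauchyPowerSeries f c R') c R' :=
    hf.hasFPowerSeriesOnBall hRpos
  have hfact := h.factorial_smul (1 : ℂ) n
  have heq : iteratedDeriv n f c = iteratedFDeriv ℂ n f c (fun _ => 1) := by
    rw [iteratedDeriv_eq_iteratedFDeriv]
  rw [heq, ← hfact]
  have hcont : ContinuousOn f (closedBall c R') := hf.continuousOn
  have hsub : ∀ θ : ℝ, circleMap c R' θ ∈ closedBall c (R' : ℝ) := fun θ =>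
    sphere_subset_closedBall (circleMap_mem_sphere c R'.coe_nonneg θ)
  have hint : IntervalIntegrable (fun θ : ℝ => ‖f (circleMap c R' θ)‖) volume 0 (2 * Real.pi) := by
    apply Continuous.intervalIntegrable
    exact (hcont.comp_continuous (continuous_circleMap c R') hsub).norm
  have hI : (2 * Real.pi)⁻¹ * ∫ θ : ℝ in (0)..2 * Real.pi, ‖f (circleMap c R' θ)‖ ≤ M := by
    have h1 : ∫ θ : ℝ in (0)..2 * Real.pi, ‖f (circleMap c R' θ)‖ ≤
        ∫ _ : ℝ in (0)..2 * Real.pi, M := by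
      apply intervalIntegral.integral_mono_on Real.two_pi_pos.le hint intervalIntegrable_const
      exact fun θ _ => hM _ (hsub θ)
    rw [intervalIntegral.integral_const, smul_eq_mul, sub_zero] at h1
    rw [inv_mul_le_iff₀ Real.two_pi_pos]
    linarith
  have hp : ‖cauchyPowerSeries f c (↑R') n‖ ≤ M * |(R' : ℝ)|⁻¹ ^ n :=
    (norm_cauchyPowerSeries_le f c R' n).trans
      (mul_le_mul_of_nonneg_right hI (by positivity))
  calc ‖n ! • (cauchyPowerSeries f c R' n) (fun _ => 1)‖
      = (n ! : ℝ) * ‖(cauchyPowerSeries f c R' n) (fun _ => 1)‖ := by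
        rw [← Nat.cast_smul_eq_nsmul ℝ, norm_smul]; simp
    _ ≤ (n ! : ℝ) * ‖cauchyPowerSeries f c R' n‖ := by
        gcongr
        simpa using (cauchyPowerSeries f c R' n).le_opNorm (fun _ => 1)
    _ ≤ (n ! : ℝ) * (M * |(R' : ℝ)|⁻¹ ^ n) := by gcongr
    _ = (n ! : ℝ) * M / (R' : ℝ) ^ n := by
        rw [abs_of_pos hR, inv_pow]
        ring

lemma iteratedDeriv_comp_ofReal {F : ℂ → ℂ} {U : Set ℂ} (hU : IsOpen U)
    (hF : DifferentiableOn ℂ F U) (n : ℕ) :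
    ∀ x : ℝ, (x : ℂ) ∈ U → iteratedDeriv n (fun y : ℝ => F y) x = iteratedDeriv n F x := by
  have hAn : AnalyticOnNhd ℂ F U := hF.analyticOnNhd hU
  have hIter : ∀ m : ℕ, AnalyticOnNhd ℂ (iteratedDeriv m F) U := by
    intro m
    induction m with
    | zero => simpa using hAn
    | succ m ihm => rw [iteratedDeriv_succ]; exact ihm.deriv
  induction n with
  | zero => simp
  | succ n ih =>
    intro x hx
    have hV : IsOpen {y : ℝ | (y : ℂ) ∈ U} := hU.preimage Complex.continuous_ofReal
    have hev : (fun y : ℝ => iteratedDeriv n (fun y : ℝ => F y) y) =ᶠ[nhds x]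
        (fun y : ℝ => iteratedDeriv n F y) := by
      filter_upwards [hV.mem_nhds hx] with y hy using ih y hy
    rw [iteratedDeriv_succ, iteratedDeriv_succ, hev.deriv_eq]
    have hd : HasDerivAt (iteratedDeriv n F) (deriv (iteratedDeriv n F) x) x :=
      ((hIter n x hx).differentiableAt).hasDerivAt
    exact hd.comp_ofReal.deriv
/-- For every `N ∈ ℕ` there is a constant `C_N` independent of `ν` such that for all
`ν ≥ 1/2` and `r ≥ 2ν`:
`(1/Γ(ν+1/2)) |(∂/∂r)^N ∫_0^∞ e^{-t} t^{ν-1/2} (1 + it/(2r))^{ν-1/2} dt| ≤ C_N 2^ν (ν/r)^N`,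
where `(ν/r)^0 = 1`. -/
theorem macdonald_integral_deriv_bound (N : ℕ) :
    ∃ C : ℝ, 0 < C ∧ ∀ ν r : ℝ, 1 / 2 ≤ ν → 2 * ν ≤ r →
      (1 / Real.Gamma (ν + 1 / 2)) *
          ‖iteratedDeriv N (fun x : ℝ =>
            ∫ t in Set.Ioi (0 : ℝ),
              ((Real.exp (-t) * t ^ (ν - 1 / 2) : ℝ) : ℂ) *
                (1 + Complex.I * (t : ℂ) / (2 * (x : ℂ))) ^ ((ν : ℂ) - 1 / 2)) r‖ ≤
        C * 2 ^ ν * (ν / r) ^ N := by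
  refine ⟨(N ! : ℝ) * 2 * 4 ^ N, by positivity, fun ν r hν hr => ?_⟩
  have hν0 : 0 < ν := by linarith
  have hr0 : 0 < r := by linarith
  set μ : ℝ := ν - 1 / 2 with hμdef
  have hμ0 : 0 ≤ μ := by simp only [hμdef]; linarith
  have hμν : μ < ν := by simp only [hμdef]; linarith
  set G : ℝ := Real.Gamma (ν + 1 / 2) with hGdef
  have hG : 0 < G := Real.Gamma_pos_of_pos (by linarith)
  have hcast : ((ν : ℂ) - 1 / 2) = ((μ : ℝ) : ℂ) := by simp only [hμdef]; push_cast; ring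
  set F : ℂ → ℂ := fun z => ∫ t in Set.Ioi (0 : ℝ),
      ((Real.exp (-t) * t ^ μ : ℝ) : ℂ) * mcW z t ^ ((μ : ℝ) : ℂ) with hFdef
  set U : Set ℂ := {z : ℂ | 0 < z.re ∧ μ < 2 * z.re} with hUdef
  have hU : IsOpen U := by
    rw [hUdef, Set.setOf_and]
    exact (isOpen_lt continuous_const Complex.continuous_re).inter
      (isOpen_lt continuous_const (continuous_const.mul Complex.continuous_re))
  have hFd : DifferentiableOn ℂ F U := F_differentiableOn hμ0
  -- the statement function is F restricted to ℝ
  have hfun : (fun x : ℝ =>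
      ∫ t in Set.Ioi (0 : ℝ),
        ((Real.exp (-t) * t ^ (ν - 1 / 2) : ℝ) : ℂ) *
          (1 + Complex.I * (t : ℂ) / (2 * (x : ℂ))) ^ ((ν : ℂ) - 1 / 2)) =
      (fun x : ℝ => F ((x : ℝ) : ℂ)) := by
    funext x
    simp only [hFdef, mcW, hcast, hμdef]
  have hrU : ((r : ℝ) : ℂ) ∈ U := by
    simp only [hUdef, Set.mem_setOf_eq, Complex.ofReal_re]
    constructor <;> linarith
  have hstep1 : iteratedDeriv N (fun x : ℝ => F ((x : ℝ) : ℂ)) r = iteratedDeriv N F r :=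
    iteratedDeriv_comp_ofReal hU hFd N r hrU
  -- closed ball inside U
  have hball : closedBall ((r : ℝ) : ℂ) (r / 2) ⊆ U := by
    intro z hz
    rw [mem_closedBall, dist_eq_norm] at hz
    have h1 : |(z - (r : ℂ)).re| ≤ ‖z - (r : ℂ)‖ := Complex.abs_re_le_norm _
    have h2 : (z - (r : ℂ)).re = z.re - r := by simp [Complex.sub_re]
    rw [h2] at h1
    have h3 := (abs_le.1 h1).1
    simp only [hUdef, Set.mem_setOf_eq]
    constructor <;> linarith
  have hzre : ∀ z ∈ closedBall ((r : ℝ) : ℂ) (r / 2), ν ≤ z.re := by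
    intro z hz
    rw [mem_closedBall, dist_eq_norm] at hz
    have h1 : |(z - (r : ℂ)).re| ≤ ‖z - (r : ℂ)‖ := Complex.abs_re_le_norm _
    have h2 : (z - (r : ℂ)).re = z.re - r := by simp [Complex.sub_re]
    rw [h2] at h1
    have h3 := (abs_le.1 h1).1
    linarith
  have hk : μ / (2 * ν) < 1 := by
    rw [div_lt_one (by positivity)]; linarith
  have hk2 : μ / (2 * ν) ≤ 1 / 2 := by
    rw [div_le_iff₀ (by positivity)]; simp only [hμdef]; linarith
  -- sup bound on closed ball
  set M : ℝ := 2 ^ (ν + 1 / 2) * G with hMdef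
  have hM : ∀ z ∈ closedBall ((r : ℝ) : ℂ) (r / 2), ‖F z‖ ≤ M := by
    intro z hz
    have hza : ν ≤ z.re := hzre z hz
    calc ‖F z‖ ≤ ∫ t in Set.Ioi (0 : ℝ),
        ‖((Real.exp (-t) * t ^ μ : ℝ) : ℂ) * mcW z t ^ ((μ : ℝ) : ℂ)‖ :=
          norm_integral_le_integral_norm _
      _ ≤ ∫ t in Set.Ioi (0 : ℝ), t ^ ((ν + 1 / 2) - 1) * Real.exp (-(1 / 2 * t)) := by
          apply setIntegral_mono_on
          · exact (F_integrand_integrable hμ0 hν0 hk hza).norm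
          · exact int_aux (by linarith) (by norm_num)
          · exact measurableSet_Ioi
          · intro t ht
            rw [Set.mem_Ioi] at ht
            refine (integrand_norm_bound hμ0 hν0 hza ht).trans ?_
            have he : (ν + 1 / 2) - 1 = μ := by simp only [hμdef]; ring
            rw [he]
            apply mul_le_mul_of_nonneg_left _ (Real.rpow_nonneg ht.le μ)
            apply Real.exp_le_exp.2
            nlinarith [hk2, ht.le]
      _ = (1 / (1 / 2)) ^ (ν + 1 / 2) * G := by
          rw [hGdef]
          exact Real.integral_rpow_mul_exp_neg_mul_Ioi (by linarith) (by norm_num)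
      _ = M := by norm_num [hMdef]
  have hcauchy : ‖iteratedDeriv N F r‖ ≤ (N ! : ℝ) * M / (r / 2) ^ N :=
    cauchy_bound (by positivity) (hFd.mono hball) hM N
  -- final arithmetic
  rw [hfun, hstep1]
  have hG' : (0:ℝ) < 1 / G := by positivity
  have hkey : (1 / G) * ‖iteratedDeriv N F r‖ ≤ (N ! : ℝ) * 2 ^ (ν + 1 / 2) * (2 / r) ^ N := by
    calc (1 / G) * ‖iteratedDeriv N F r‖
        ≤ (1 / G) * ((N ! : ℝ) * (2 ^ (ν + 1 / 2) * G) / (r / 2) ^ N) := by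
          apply mul_le_mul_of_nonneg_left _ hG'.le
          simpa only [hMdef] using hcauchy
      _ = (N ! : ℝ) * 2 ^ (ν + 1 / 2) * (2 / r) ^ N := by
          rw [div_pow, div_pow]
          field_simp
  refine hkey.trans ?_
  have h2half : (2:ℝ) ^ (ν + 1 / 2) ≤ 2 ^ ν * 2 := by
    rw [Real.rpow_add two_pos]
    have h12 : (2:ℝ) ^ ((1:ℝ) / 2) ≤ 2 := by
      calc (2:ℝ) ^ ((1:ℝ) / 2) ≤ 2 ^ (1:ℝ) :=
          Real.rpow_le_rpow_of_exponent_le one_le_two (by norm_num)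
        _ = 2 := Real.rpow_one 2
    exact mul_le_mul_of_nonneg_left h12 (Real.rpow_nonneg (by norm_num) _)
  have hpow2 : ((2:ℝ) / r) ^ N ≤ 4 ^ N * (ν / r) ^ N := by
    rw [← mul_pow]
    apply pow_le_pow_left₀ (by positivity)
    have h4 : (4:ℝ) * (ν / r) = 4 * ν / r := by ring
    rw [h4]
    gcongr
    linarith
  calc (N ! : ℝ) * 2 ^ (ν + 1 / 2) * (2 / r) ^ N
      ≤ (N ! : ℝ) * (2 ^ ν * 2) * (4 ^ N * (ν / r) ^ N) := by
        apply mul_le_mul (mul_le_mul_of_nonneg_left h2half (by positivity)) hpow2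
          (by positivity) ?_
        have : (0:ℝ) < 2 ^ ν := Real.rpow_pos_of_pos two_pos ν
        positivity
    _ = (N ! : ℝ) * 2 * 4 ^ N * 2 ^ ν * (ν / r) ^ N := by ring
end
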